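/- For every θ ∈ ℝ^D and every k ∈ {1,…,D}, the cost function of a PQC satisfies the parameter-shift rule ∂_{θ_k} C(θ) = (1/2)·( C(θ + (π/2)e_k) − C(θ − (π/2)e_k) ), where e_k is the k-th standard basis vector of ℝ^D. -/

import Mathlib

open Matrix Real

attribute [local instance] Matrix.linftyOpNormedRing Matrix.linftyOpNormedAlgebra

section helpers
variable {m : Type*} [Fintype m] [DecidableEq m]

theorem exp_invol (V : Matrix m m ℂ) (hV : V * V = 1) (z : ℂ) :
    NormedSpace.exp (z • V) = Complex.cosh z • (1 : Matrix m m ℂ) + Complex.sinh z • V := by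
  classical
  let φ : ℂ × ℂ →+* Matrix m m ℂ :=
  { toFun := fun p => ((p.1 + p.2) / 2) • (1 : Matrix m m ℂ) + ((p.1 - p.2) / 2) • V
    map_one' := by norm_num
    map_mul' := by
      intro p q
      simp only [Prod.fst_mul, Prod.snd_mul]
      simp only [add_mul, mul_add, smul_mul_assoc, mul_smul_comm, one_mul, mul_one, hV]
      match_scalars <;> ring
    map_zero' := by norm_num
    map_add' := by intro p q; simp only [Prod.fst_add, Prod.snd_add]; match_scalars <;> ring }
  have hφc : Continuous φ := by
    show Continuous fun p : ℂ × ℂ => ((p.1 + p.2) / 2) • (1 : Matrix m m ℂ) + ((p.1 - p.2) / 2) • V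
    fun_prop
  have key := NormedSpace.map_exp φ hφc (z, -z)
  have h1 : φ (z, -z) = z • V := by
    show ((z + -z) / 2) • (1 : Matrix m m ℂ) + ((z - -z) / 2) • V = z • V
    match_scalars <;> ring
  have h2 : NormedSpace.exp ((z, -z) : ℂ × ℂ) = (Complex.exp z, Complex.exp (-z)) := by
    ext
    · rw [Prod.fst_exp, Complex.exp_eq_exp_ℂ]
    · rw [Prod.snd_exp, Complex.exp_eq_exp_ℂ]
  rw [h2, h1] at key
  refine Eq.trans key.symm ?_
  show ((Complex.exp z + Complex.exp (-z)) / 2) • (1 : Matrix m m ℂ)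
      + ((Complex.exp z - Complex.exp (-z)) / 2) • V = _
  rw [Complex.cosh, Complex.sinh]

theorem exp_invol_real (V : Matrix m m ℂ) (hV : V * V = 1) (t : ℝ) :
    NormedSpace.exp ((-Complex.I * ((t : ℂ) / 2)) • V)
      = ((Real.cos (t / 2) : ℝ) : ℂ) • (1 : Matrix m m ℂ)
        + (((Real.sin (t / 2) : ℝ) : ℂ) * -Complex.I) • V := by
  have hz : -Complex.I * ((t : ℂ) / 2) = ((-(t / 2) : ℝ) : ℂ) * Complex.I := by
    push_cast; ring
  rw [hz, exp_invol V hV]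
  congr 1
  · congr 1
    rw [Complex.cosh_mul_I, ← Complex.ofReal_cos, Real.cos_neg]
  · congr 1
    rw [Complex.sinh_mul_I, ← Complex.ofReal_sin, Real.sin_neg]
    push_cast; ring

theorem diff_list_prod {ι : Type*} {E : Type*} [NormedAddCommGroup E] [NormedSpace ℝ E]
    (l : List ι) (f : ι → E → Matrix m m ℂ) (hf : ∀ i, Differentiable ℝ (f i)) :
    Differentiable ℝ fun x => (l.map fun i => f i x).prod := by
  induction l with
  | nil => simpa using differentiable_const (1 : Matrix m m ℂ)
  | cons a l ih =>
    simp only [List.map_cons, List.prod_cons]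
    exact (hf a).mul ih

end helpers

/-- For a PQC `U(θ) = ∏_{k=D}^{1} exp(−i(θ_k/2)V_k)·W_k` (factor `k = D`
leftmost) with unitary fixed gates `W_k`, Hermitian involutions `V_k` as rotation axes,
Hermitian observable `H` and cost `C(θ) = ⟨U(θ)e₀, H U(θ)e₀⟩`, the parameter-shift rule
`∂_{θ_k} C(θ) = (1/2)(C(θ + (π/2)e_k) − C(θ − (π/2)e_k))` holds for all `θ` and `k`. -/
theorem stmt1 (N D : ℕ) (hN : 1 ≤ N) (hD : 1 ≤ D)
    (W V : Fin D → Matrix (Fin (2 ^ N)) (Fin (2 ^ N)) ℂ)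
    (hW : ∀ k, (W k)ᴴ * W k = 1 ∧ W k * (W k)ᴴ = 1)
    (hVherm : ∀ k, (V k)ᴴ = V k) (hVinv : ∀ k, V k * V k = 1)
    (H : Matrix (Fin (2 ^ N)) (Fin (2 ^ N)) ℂ) (hH : Hᴴ = H)
    (e₀ : Fin (2 ^ N) → ℂ) (he₀ : e₀ = fun i : Fin (2 ^ N) => if (i : ℕ) = 0 then (1 : ℂ) else 0)
    (U : (Fin D → ℝ) → Matrix (Fin (2 ^ N)) (Fin (2 ^ N)) ℂ)
    (hU : ∀ θ, U θ = ((List.finRange D).reverse.map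
        (fun k => NormedSpace.exp ((-Complex.I * ((θ k : ℂ) / 2)) • V k) * W k)).prod)
    (C : (Fin D → ℝ) → ℝ)
    (hC : ∀ θ, (C θ : ℂ) = star (U θ *ᵥ e₀) ⬝ᵥ (H *ᵥ (U θ *ᵥ e₀)))
    (θ : Fin D → ℝ) (k : Fin D) :
    fderiv ℝ C θ (Pi.single k 1) =
      (1 / 2) * (C (θ + (π / 2) • (Pi.single k 1 : Fin D → ℝ)) - C (θ - (π / 2) • (Pi.single k 1 : Fin D → ℝ))) := by
  classical
  set e : Fin D → ℝ := Pi.single k 1 with he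
  set F : Fin D → (Fin D → ℝ) → Matrix (Fin (2 ^ N)) (Fin (2 ^ N)) ℂ :=
    fun j θ' => ((Real.cos (θ' j / 2) : ℝ) : ℂ) • W j
      + (((Real.sin (θ' j / 2) : ℝ) : ℂ) * -Complex.I) • (V j * W j) with hF
  -- U as a product of the explicit trig factors
  have hFU : ∀ θ', U θ' = ((List.finRange D).reverse.map fun j => F j θ').prod := by
    intro θ'
    rw [hU θ']
    congr 1
    apply List.map_congr_left
    intro j _
    rw [exp_invol_real (V j) (hVinv j) (θ' j), add_mul, smul_mul_assoc, smul_mul_assoc, one_mul,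
      hF]
  -- differentiability of the factors
  have hFd : ∀ j, Differentiable ℝ (F j) := by
    intro j
    have h1 : Differentiable ℝ fun θ' : Fin D → ℝ => Real.cos (θ' j / 2) := by fun_prop
    have h2 : Differentiable ℝ fun θ' : Fin D → ℝ => Real.sin (θ' j / 2) := by fun_prop
    exact ((Complex.ofRealCLM.differentiable.comp h1).smul_const (W j)).add
      (((Complex.ofRealCLM.differentiable.comp h2).mul_const (-Complex.I)).smul_const (V j * W j))
  have hUd : Differentiable ℝ U := by
    have : U = fun θ' => ((List.finRange D).reverse.map fun j => F j θ').prod := funext hFU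
    rw [this]
    exact diff_list_prod _ _ hFd
  -- the state vector is differentiable
  set ψ : (Fin D → ℝ) → (Fin (2 ^ N) → ℂ) := fun θ' => U θ' *ᵥ e₀ with hψ
  have hψd : Differentiable ℝ ψ := by
    let lin : Matrix (Fin (2 ^ N)) (Fin (2 ^ N)) ℂ →ₗ[ℂ] (Fin (2 ^ N) → ℂ) :=
      { toFun := fun A => A *ᵥ e₀
        map_add' := fun A B => Matrix.add_mulVec A B e₀
        map_smul' := fun c A => Matrix.smul_mulVec c A e₀ }
    exact ((LinearMap.toContinuousLinearMap lin).restrictScalars ℝ).differentiable.comp hUd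
  -- the complex cost and its differentiability
  set g : (Fin D → ℝ) → ℂ := fun θ' => star (ψ θ') ⬝ᵥ (H *ᵥ ψ θ') with hg
  have hgd : Differentiable ℝ g := by
    have hgeq : g = fun θ' => ∑ i, star (ψ θ' i) * ∑ j, H i j * ψ θ' j := by
      funext θ'
      simp [hg, dotProduct, Matrix.mulVec]
    rw [hgeq]
    have hψi : ∀ i, Differentiable ℝ fun θ' => ψ θ' i := fun i =>
      differentiable_pi.mp hψd i
    exact Differentiable.fun_sum fun i _ =>
      ((hψi i).star).mul (Differentiable.fun_sum fun j _ => (hψi j).const_mul (H i j))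
  have hCre : ∀ θ', C θ' = (g θ').re := by
    intro θ'
    have h := congrArg Complex.re (hC θ')
    simpa [hg, hψ] using h
  have hCd : Differentiable ℝ C := by
    have : C = fun θ' => (g θ').re := funext hCre
    rw [this]
    exact Complex.reCLM.differentiable.comp hgd
  -- split the list of gates at k
  obtain ⟨A, B, hAB⟩ := List.append_of_mem (List.mem_reverse.mpr (List.mem_finRange k))
  have hnd : (A ++ k :: B).Nodup := by
    rw [← hAB]; exact List.nodup_reverse.mpr (List.nodup_finRange D)
  have hkA : k ∉ A := fun h =>
    (List.disjoint_left.mp (List.nodup_append'.mp hnd).2.2) h List.mem_cons_self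
  have hkB : k ∉ B := (List.nodup_cons.mp (List.nodup_append'.mp hnd).2.1).1
  set MA : Matrix (Fin (2 ^ N)) (Fin (2 ^ N)) ℂ := (A.map fun j => F j θ).prod with hMA
  set MB : Matrix (Fin (2 ^ N)) (Fin (2 ^ N)) ℂ := (B.map fun j => F j θ).prod with hMB
  set x : Fin (2 ^ N) → ℂ := (MA * (W k * MB)) *ᵥ e₀ with hx
  set y : Fin (2 ^ N) → ℂ := (MA * ((V k * W k) * MB)) *ᵥ e₀ with hy
  -- the state along the line θ + s • e
  have hψs : ∀ s : ℝ, ψ (θ + s • e) =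
      ((Real.cos ((θ k + s) / 2) : ℝ) : ℂ) • x
        + (((Real.sin ((θ k + s) / 2) : ℝ) : ℂ) * -Complex.I) • y := by
    intro s
    have hjne : ∀ j, j ≠ k → (θ + s • e) j = θ j := by
      intro j hj
      simp [he, Pi.single_eq_of_ne hj]
    have hk' : (θ + s • e) k = θ k + s := by simp [he]
    show U (θ + s • e) *ᵥ e₀ = _
    rw [hFU, hAB, List.map_append, List.prod_append, List.map_cons, List.prod_cons]
    have hA' : (A.map fun j => F j (θ + s • e)) = A.map fun j => F j θ := by
      apply List.map_congr_left
      intro j hj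
      simp only [hF, hjne j (ne_of_mem_of_not_mem hj hkA)]
    have hB' : (B.map fun j => F j (θ + s • e)) = B.map fun j => F j θ := by
      apply List.map_congr_left
      intro j hj
      simp only [hF, hjne j (ne_of_mem_of_not_mem hj hkB)]
    have hFk : F k (θ + s • e) = ((Real.cos ((θ k + s) / 2) : ℝ) : ℂ) • W k
        + (((Real.sin ((θ k + s) / 2) : ℝ) : ℂ) * -Complex.I) • (V k * W k) := by
      simp only [hF, hk']
    rw [hA', hB', hFk, ← hMA, ← hMB]
    rw [add_mul, smul_mul_assoc, smul_mul_assoc, mul_add, mul_smul_comm, mul_smul_comm,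
      Matrix.add_mulVec, Matrix.smul_mulVec, Matrix.smul_mulVec, ← hx, ← hy]
  -- the four quadratic-form coefficients
  set α : ℂ := star x ⬝ᵥ (H *ᵥ x) with hαd
  set β : ℂ := star x ⬝ᵥ (H *ᵥ y) with hβd
  set γ : ℂ := star y ⬝ᵥ (H *ᵥ x) with hγd
  set δ : ℂ := star y ⬝ᵥ (H *ᵥ y) with hδd
  -- the key trigonometric form of C on the line
  have key : ∀ s : ℝ, C (θ + s • e)
      = (α.re + δ.re) / 2 + ((α.re - δ.re) / 2) * Real.cos (θ k + s)
        + (((Complex.I * (γ - β)).re) / 2) * Real.sin (θ k + s) := by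
    intro s
    rw [hCre]
    have hgs : g (θ + s • e)
        = ((Real.cos ((θ k + s) / 2) * Real.cos ((θ k + s) / 2) : ℝ) : ℂ) * α
          + ((Real.sin ((θ k + s) / 2) * Real.sin ((θ k + s) / 2) : ℝ) : ℂ) * δ
          + ((Real.sin ((θ k + s) / 2) * Real.cos ((θ k + s) / 2) : ℝ) : ℂ)
            * (Complex.I * (γ - β)) := by
      show star (ψ (θ + s • e)) ⬝ᵥ (H *ᵥ ψ (θ + s • e)) = _
      rw [hψs s]
      simp only [star_add, star_smul, Matrix.mulVec_add, Matrix.mulVec_smul, add_dotProduct,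
        dotProduct_add, smul_dotProduct, dotProduct_smul, smul_eq_mul, star_mul', star_neg,
        Complex.star_def, Complex.conj_I, Complex.conj_ofReal, Complex.ofReal_mul,
        hαd, hβd, hγd, hδd]
      ring_nf
      rw [Complex.I_sq]
      ring
    rw [hgs]
    simp only [Complex.add_re, Complex.re_ofReal_mul]
    set u := (θ k + s) / 2 with hu
    have hcos : Real.cos (θ k + s) = 2 * Real.cos u ^ 2 - 1 := by
      rw [show θ k + s = 2 * u from by rw [hu]; ring, Real.cos_two_mul]
    have hsin : Real.sin (θ k + s) = 2 * Real.sin u * Real.cos u := by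
      rw [show θ k + s = 2 * u from by rw [hu]; ring, Real.sin_two_mul]
    rw [hcos, hsin]
    linear_combination δ.re * Real.sin_sq_add_cos_sq u
  -- derivative of the affine line map
  have hθ0 : θ + (0 : ℝ) • e = θ := by simp
  have hline : HasDerivAt (fun s : ℝ => θ + s • e) e 0 := by
    simpa using ((hasDerivAt_id (0 : ℝ)).smul_const e).const_add θ
  have hcomp : HasDerivAt (fun s : ℝ => C (θ + s • e)) (fderiv ℝ C θ e) 0 := by
    have hf : HasFDerivAt C (fderiv ℝ C θ) (θ + (0 : ℝ) • e) := by
      rw [hθ0]; exact (hCd θ).hasFDerivAt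
    exact hf.comp_hasDerivAt 0 hline
  -- derivative of the trigonometric form
  have ha : HasDerivAt (fun s : ℝ => θ k + s) 1 0 := by
    simpa using (hasDerivAt_id (0 : ℝ)).const_add (θ k)
  have htrig : HasDerivAt (fun s : ℝ => (α.re + δ.re) / 2
      + ((α.re - δ.re) / 2) * Real.cos (θ k + s)
      + (((Complex.I * (γ - β)).re) / 2) * Real.sin (θ k + s))
      (((α.re - δ.re) / 2) * (-Real.sin (θ k)) + (((Complex.I * (γ - β)).re) / 2) * Real.cos (θ k)) 0 := by
    have hc := (ha.cos).const_mul ((α.re - δ.re) / 2)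
    have hs := (ha.sin).const_mul (((Complex.I * (γ - β)).re) / 2)
    have := (hc.const_add ((α.re + δ.re) / 2)).add hs
    simp at this ⊢; exact this
  have hfun : (fun s : ℝ => C (θ + s • e)) = fun s : ℝ => (α.re + δ.re) / 2
      + ((α.re - δ.re) / 2) * Real.cos (θ k + s)
      + (((Complex.I * (γ - β)).re) / 2) * Real.sin (θ k + s) := funext key
  rw [hfun] at hcomp
  have hfd : fderiv ℝ C θ e
      = ((α.re - δ.re) / 2) * (-Real.sin (θ k)) + (((Complex.I * (γ - β)).re) / 2) * Real.cos (θ k) :=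
    hcomp.unique htrig
  have hsub : θ - (π / 2) • e = θ + (-(π / 2)) • e := by
    rw [neg_smul, ← sub_eq_add_neg]
  rw [hfd, hsub, key (π / 2), key (-(π / 2))]
  rw [Real.cos_add, Real.sin_add, show θ k + -(π / 2) = θ k - π / 2 from by ring,
    Real.cos_sub, Real.sin_sub, Real.cos_pi_div_two, Real.sin_pi_div_two]
  ring
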